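/- For a symmetric positive semidefinite matrix K indexed by V and disjoint nonempty subsets A, B, C of V with K_{A∪B∪C} and K_C invertible, the (A,B) block of (K_{A∪B∪C})^{-1} is zero if and only if K_{A,B} = K_{A,C} · (K_C)^{-1} · K_{C,B}. -/

import Mathlib

open Matrix

/-- Principal submatrix of `K` on the finset `A`. -/
def psub {V : Type*} (K : Matrix V V ℝ) (A : Finset V) : Matrix A A ℝ :=
  K.submatrix Subtype.val Subtype.val

/-- The `(A,B)` block of `K`. -/
def bsub {V : Type*} (K : Matrix V V ℝ) (A B : Finset V) : Matrix A B ℝ :=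
  K.submatrix Subtype.val Subtype.val

private lemma my_posDef_of_psd_isUnit_det {n : Type*} [Fintype n] [DecidableEq n]
    {M : Matrix n n ℝ} (h : M.PosSemidef) (hd : IsUnit M.det) : M.PosDef := by
  refine Matrix.PosDef.of_dotProduct_mulVec_pos h.1 (fun x hx => ?_)
  rcases lt_or_eq_of_le (h.dotProduct_mulVec_nonneg x) with hlt | heq
  · exact hlt
  · exfalso
    have h0 : M *ᵥ x = 0 := (h.dotProduct_mulVec_zero_iff x).mp heq.symm
    have hx0 : x = 0 := by
      have := congrArg (fun v => M⁻¹ *ᵥ v) h0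
      simpa [Matrix.mulVec_mulVec, Matrix.nonsing_inv_mul _ hd] using this
    exact hx hx0

private lemma my_posDef_block₂₂ {m n : Type*} [Fintype m] [Fintype n]
    {M : Matrix (m ⊕ n) (m ⊕ n) ℝ} (h : M.PosDef) :
    (M.submatrix Sum.inr Sum.inr).PosDef := by
  refine Matrix.PosDef.of_dotProduct_mulVec_pos ?_ ?_
  · have h1 := h.1
    ext i j
    have := congrFun (congrFun h1 (Sum.inr i)) (Sum.inr j)
    simpa [Matrix.conjTranspose_apply] using this
  · intro y hy
    have hx : (Sum.elim 0 y : m ⊕ n → ℝ) ≠ 0 := by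
      intro hc
      apply hy
      funext j
      exact congrFun hc (Sum.inr j)
    have := h.dotProduct_mulVec_pos hx
    convert this using 1
    simp [dotProduct, Matrix.mulVec, Fintype.sum_sum_type]

/-- For a symmetric PSD matrix `K` and disjoint nonempty `A, B, C` with `K_{A∪B∪C}` and `K_C`
invertible: the `(A,B)` block of `(K_{A∪B∪C})⁻¹` is zero iff `K_{A,B} = K_{A,C} K_C⁻¹ K_{C,B}`. -/
theorem stmt1 {V : Type*} [Fintype V] [DecidableEq V]
    (K : Matrix V V ℝ) (hsym : K.IsSymm) (hpsd : K.PosSemidef)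
    (A B C : Finset V) (hA : A.Nonempty) (hB : B.Nonempty) (hC : C.Nonempty)
    (hAB : Disjoint A B) (hAC : Disjoint A C) (hBC : Disjoint B C)
    (hinv1 : IsUnit (psub K (A ∪ B ∪ C)).det) (hinv2 : IsUnit (psub K C).det) :
    (∀ i j : ↥(A ∪ B ∪ C), (i : V) ∈ A → (j : V) ∈ B →
        (psub K (A ∪ B ∪ C))⁻¹ i j = 0)
      ↔ bsub K A B = bsub K A C * (psub K C)⁻¹ * bsub K C B := by
  classical
  -- index maps
  let u : (↥A ⊕ ↥B) → V := Sum.elim Subtype.val Subtype.val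
  let w : ((↥A ⊕ ↥B) ⊕ ↥C) → V := Sum.elim u Subtype.val
  have hw : ∀ p, w p ∈ A ∪ B ∪ C := by
    rintro ((a | b) | c)
    · exact Finset.mem_union_left _ (Finset.mem_union_left _ a.2)
    · exact Finset.mem_union_left _ (Finset.mem_union_right _ b.2)
    · exact Finset.mem_union_right _ c.2
  let g : ((↥A ⊕ ↥B) ⊕ ↥C) → ↥(A ∪ B ∪ C) := fun p => ⟨w p, hw p⟩
  have hginj : Function.Injective g := by
    rintro ((a | b) | c) ((a' | b') | c') h <;>
      simp only [g, w, u, Subtype.mk.injEq, Sum.elim_inl, Sum.elim_inr] at h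
    · rw [Subtype.ext h]
    · exact absurd (h ▸ a.2) (Finset.disjoint_left.mp hAB.symm b'.2)
    · exact absurd (h ▸ a.2) (Finset.disjoint_left.mp hAC.symm c'.2)
    · exact absurd (h ▸ b.2) (Finset.disjoint_left.mp hAB a'.2)
    · rw [Subtype.ext h]
    · exact absurd (h ▸ b.2) (Finset.disjoint_left.mp hBC.symm c'.2)
    · exact absurd (h ▸ c.2) (Finset.disjoint_left.mp hAC a'.2)
    · exact absurd (h ▸ c.2) (Finset.disjoint_left.mp hBC b'.2)
    · rw [Subtype.ext h]
  have hgsurj : Function.Surjective g := by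
    rintro ⟨v, hv⟩
    by_cases ha : v ∈ A
    · exact ⟨Sum.inl (Sum.inl ⟨v, ha⟩), rfl⟩
    by_cases hb : v ∈ B
    · exact ⟨Sum.inl (Sum.inr ⟨v, hb⟩), rfl⟩
    have hc : v ∈ C := by
      rcases Finset.mem_union.mp hv with h' | h'
      · rcases Finset.mem_union.mp h' with h'' | h'' <;> tauto
      · exact h'
    exact ⟨Sum.inr ⟨v, hc⟩, rfl⟩
  let e : ((↥A ⊕ ↥B) ⊕ ↥C) ≃ ↥(A ∪ B ∪ C) := Equiv.ofBijective g ⟨hginj, hgsurj⟩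
  -- block matrices
  let P : Matrix (↥A ⊕ ↥B) (↥A ⊕ ↥B) ℝ := K.submatrix u u
  let Q : Matrix (↥A ⊕ ↥B) ↥C ℝ := K.submatrix u Subtype.val
  let Q' : Matrix ↥C (↥A ⊕ ↥B) ℝ := K.submatrix Subtype.val u
  let R : Matrix ↥C ↥C ℝ := psub K C
  have hNsub : fromBlocks P Q Q' R = K.submatrix w w := by
    ext (p | c) (q | c') <;> rfl
  have hNM : fromBlocks P Q Q' R = (psub K (A ∪ B ∪ C)).submatrix e e := by
    rw [hNsub]; rfl
  have hNdet : IsUnit (fromBlocks P Q Q' R).det := by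
    rw [hNM, Matrix.det_submatrix_equiv_self]
    exact hinv1
  haveI iN : Invertible (fromBlocks P Q Q' R) := (fromBlocks P Q Q' R).invertibleOfIsUnitDet hNdet
  haveI iR : Invertible R := R.invertibleOfIsUnitDet hinv2
  haveI iS0 : Invertible (P - Q * ⅟R * Q') := invertibleOfFromBlocks₂₂Invertible P Q Q' R
  haveI iS : Invertible (P - Q * R⁻¹ * Q') :=
    iS0.copy _ (by rw [invOf_eq_nonsing_inv])
  -- positivity facts
  have hNpsd : (fromBlocks P Q Q' R).PosSemidef := by
    rw [hNsub]; exact hpsd.submatrix w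
  have hRpd : R.PosDef := my_posDef_of_psd_isUnit_det (hpsd.submatrix _) hinv2
  have hQ' : Q' = Qᴴ := by
    ext c p
    exact (hsym.apply _ _).symm
  have hSpsd : (P - Q * R⁻¹ * Q').PosSemidef := by
    rw [hQ']
    rw [← Matrix.PosDef.fromBlocks₂₂ P Q hRpd]
    rw [← hQ']
    exact hNpsd
  have hSpd : (P - Q * R⁻¹ * Q').PosDef :=
    my_posDef_of_psd_isUnit_det hSpsd (isUnit_det_of_invertible _)
  -- the four blocks of the Schur complement
  let T11 : Matrix ↥A ↥A ℝ := bsub K A A - bsub K A C * R⁻¹ * bsub K C A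
  let T12 : Matrix ↥A ↥B ℝ := bsub K A B - bsub K A C * R⁻¹ * bsub K C B
  let T21 : Matrix ↥B ↥A ℝ := bsub K B A - bsub K B C * R⁻¹ * bsub K C A
  let T22 : Matrix ↥B ↥B ℝ := bsub K B B - bsub K B C * R⁻¹ * bsub K C B
  have hSM : P - Q * R⁻¹ * Q' = fromBlocks T11 T12 T21 T22 := by
    ext (i | i) (j | j) <;>
      simp [P, Q, Q', T11, T12, T21, T22, u, bsub, fromBlocks, Matrix.mul_apply,
        Matrix.sub_apply]
  have hT22pd : T22.PosDef := by
    exact my_posDef_block₂₂ (hSM ▸ hSpd)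
  haveI iT22 : Invertible T22 := T22.invertibleOfIsUnitDet hT22pd.det_pos.ne'.isUnit
  haveI iF : Invertible (fromBlocks T11 T12 T21 T22) := iS.copy _ hSM.symm
  haveI iW0 : Invertible (T11 - T12 * ⅟T22 * T21) :=
    invertibleOfFromBlocks₂₂Invertible T11 T12 T21 T22
  haveI iW : Invertible (T11 - T12 * T22⁻¹ * T21) :=
    iW0.copy _ (by rw [invOf_eq_nonsing_inv])
  -- inverse formulas
  have h1 : (fromBlocks P Q Q' R)⁻¹ =
      fromBlocks (P - Q * R⁻¹ * Q')⁻¹ (-((P - Q * R⁻¹ * Q')⁻¹ * Q * R⁻¹))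
        (-(R⁻¹ * Q' * (P - Q * R⁻¹ * Q')⁻¹))
        (R⁻¹ + R⁻¹ * Q' * (P - Q * R⁻¹ * Q')⁻¹ * Q * R⁻¹) := by
    have := invOf_fromBlocks₂₂_eq P Q Q' R
    simp only [invOf_eq_nonsing_inv] at this
    exact this
  have h2 : (fromBlocks T11 T12 T21 T22)⁻¹ =
      fromBlocks (T11 - T12 * T22⁻¹ * T21)⁻¹
        (-((T11 - T12 * T22⁻¹ * T21)⁻¹ * T12 * T22⁻¹))
        (-(T22⁻¹ * T21 * (T11 - T12 * T22⁻¹ * T21)⁻¹))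
        (T22⁻¹ + T22⁻¹ * T21 * (T11 - T12 * T22⁻¹ * T21)⁻¹ * T12 * T22⁻¹) := by
    have := invOf_fromBlocks₂₂_eq T11 T12 T21 T22
    simp only [invOf_eq_nonsing_inv] at this
    exact this
  -- identify the (A,B) entries of the big inverse
  have hentry : ∀ (a : ↥A) (b : ↥B),
      (psub K (A ∪ B ∪ C))⁻¹ (g (Sum.inl (Sum.inl a))) (g (Sum.inl (Sum.inr b)))
        = -(((T11 - T12 * T22⁻¹ * T21)⁻¹ * T12 * T22⁻¹) a b) := by
    intro a b
    have hM : (psub K (A ∪ B ∪ C))⁻¹ (g (Sum.inl (Sum.inl a))) (g (Sum.inl (Sum.inr b)))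
        = (fromBlocks P Q Q' R)⁻¹ (Sum.inl (Sum.inl a)) (Sum.inl (Sum.inr b)) := by
      rw [hNM, Matrix.inv_submatrix_equiv]
      rfl
    rw [hM, h1]
    show (P - Q * R⁻¹ * Q')⁻¹ (Sum.inl a) (Sum.inr b) = _
    rw [hSM, h2]
    rfl
  constructor
  · intro hz
    have hzero : (T11 - T12 * T22⁻¹ * T21)⁻¹ * T12 * T22⁻¹ = 0 := by
      ext a b
      have := hz (g (Sum.inl (Sum.inl a))) (g (Sum.inl (Sum.inr b))) a.2 b.2
      rw [hentry a b] at this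
      simpa using this
    have hT12 : T12 = 0 := by
      have hW : IsUnit (T11 - T12 * T22⁻¹ * T21).det := isUnit_det_of_invertible _
      have h22 : IsUnit T22.det := hT22pd.det_pos.ne'.isUnit
      calc T12 = (T11 - T12 * T22⁻¹ * T21) *
            ((T11 - T12 * T22⁻¹ * T21)⁻¹ * T12 * T22⁻¹) * T22 := by
              rw [← Matrix.mul_assoc, ← Matrix.mul_assoc,
                Matrix.mul_nonsing_inv _ hW, Matrix.one_mul, Matrix.mul_assoc,
                Matrix.nonsing_inv_mul _ h22, Matrix.mul_one]
        _ = 0 := by rw [hzero, Matrix.mul_zero, Matrix.zero_mul]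
    have := sub_eq_zero.mp hT12
    exact this
  · intro hr
    have hT12 : T12 = 0 := sub_eq_zero.mpr hr
    intro i j hiA hjB
    have hi : i = g (Sum.inl (Sum.inl ⟨(i : V), hiA⟩)) := Subtype.ext rfl
    have hj : j = g (Sum.inl (Sum.inr ⟨(j : V), hjB⟩)) := Subtype.ext rfl
    rw [hi, hj, hentry, hT12]
    simp
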